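/- arXiv:1107.4130 — 2 statements merged into one kernel-verified Lean document; each statement's English description precedes it below -/
import Mathlib

section
/- Assume p ≡ 3 (mod 4). Then there is exactly one λ ∈ K̄ satisfying −λ(1)·λ(−1) = 1, and this λ has order 2. -/
instance (X : Type*) [DecidableEq X] : DecidableEq (OnePoint X) :=
  inferInstanceAs (DecidableEq (Option X))

/-- The translation `z ↦ z + a` on `ℤ/p ∪ {∞}`, fixing `∞`. -/
def ptrans (p : ℕ) (a : ZMod p) : Equiv.Perm (OnePoint (ZMod p)) :=
  Equiv.optionCongr (Equiv.addRight a)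

/-- The map `z ↦ a z` on `ℤ/p ∪ {∞}`, fixing `∞`, for `a ≠ 0`. -/
def pmul (p : ℕ) [Fact p.Prime] (a : ZMod p) (ha : a ≠ 0) : Equiv.Perm (OnePoint (ZMod p)) :=
  Equiv.optionCongr (Equiv.mulLeft₀ a ha)

/-- Multiplication by `a` extended to `ℤ/p ∪ {∞}` (with `a·∞ = ∞`). -/
def opSmul (p : ℕ) (a : ZMod p) : OnePoint (ZMod p) → OnePoint (ZMod p) :=
  fun x => Option.map (fun z => a * z) x

/-- Underlying function of the map `z ↦ -1/z`. -/
def negInvFun (p : ℕ) : OnePoint (ZMod p) → OnePoint (ZMod p)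
  | Option.none => Option.some (0 : ZMod p)
  | Option.some z => if z = 0 then Option.none else Option.some (-z⁻¹ : ZMod p)

/-- The permutation `z ↦ -1/z` of `ℤ/p ∪ {∞}` (sending `0 ↦ ∞` and `∞ ↦ 0`). -/
def negInvPerm (p : ℕ) [Fact p.Prime] : Equiv.Perm (OnePoint (ZMod p)) :=
  Function.Involutive.toPerm (negInvFun p) (by
    intro x
    match x with
    | Option.none => simp [negInvFun]; rfl
    | Option.some z =>
      by_cases hz : z = 0
      · simp [negInvFun, hz]; rfl
      · have h1 : (-z⁻¹ : ZMod p) ≠ 0 := by simp [hz]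
        simp [negInvFun, hz, h1, inv_neg, inv_inv]; rfl)

/-- The involution `(0 ∞)(1 3)(2 6)(4 5)`. -/
def inv1 (p : ℕ) : Equiv.Perm (OnePoint (ZMod p)) :=
  Equiv.swap ((0 : ZMod p) : OnePoint (ZMod p)) OnePoint.infty *
  Equiv.swap ((1 : ZMod p) : OnePoint (ZMod p)) ((3 : ZMod p) : OnePoint (ZMod p)) *
  Equiv.swap ((2 : ZMod p) : OnePoint (ZMod p)) ((6 : ZMod p) : OnePoint (ZMod p)) *
  Equiv.swap ((4 : ZMod p) : OnePoint (ZMod p)) ((5 : ZMod p) : OnePoint (ZMod p))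

/-- The involution `(0 ∞)(1 5)(2 3)(4 6)`. -/
def inv2 (p : ℕ) : Equiv.Perm (OnePoint (ZMod p)) :=
  Equiv.swap ((0 : ZMod p) : OnePoint (ZMod p)) OnePoint.infty *
  Equiv.swap ((1 : ZMod p) : OnePoint (ZMod p)) ((5 : ZMod p) : OnePoint (ZMod p)) *
  Equiv.swap ((2 : ZMod p) : OnePoint (ZMod p)) ((3 : ZMod p) : OnePoint (ZMod p)) *
  Equiv.swap ((4 : ZMod p) : OnePoint (ZMod p)) ((6 : ZMod p) : OnePoint (ZMod p))

/-- The set of nonzero squares in `ℤ/p`. -/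
def Rset (p : ℕ) : Set (ZMod p) := {a | a ≠ 0 ∧ IsSquare a}

/-- The set of nonsquares in `(ℤ/p)*`. -/
def Nset (p : ℕ) : Set (ZMod p) := {a | a ≠ 0 ∧ ¬ IsSquare a}

namespace UL

@[simp] lemma ptrans_some (p : ℕ) (a z : ZMod p) :
    ptrans p a (OnePoint.some z) = OnePoint.some (z + a) := rfl
@[simp] lemma ptrans_infty (p : ℕ) (a : ZMod p) :
    ptrans p a OnePoint.infty = OnePoint.infty := rfl
@[simp] lemma pmul_some (p : ℕ) [Fact p.Prime] (a z : ZMod p) (ha : a ≠ 0) :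
    pmul p a ha (OnePoint.some z) = OnePoint.some (a * z) := rfl
@[simp] lemma pmul_infty (p : ℕ) [Fact p.Prime] (a : ZMod p) (ha : a ≠ 0) :
    pmul p a ha OnePoint.infty = OnePoint.infty := rfl

lemma some_injective (p : ℕ) : Function.Injective (OnePoint.some : ZMod p → OnePoint (ZMod p)) :=
  Option.some_injective _

lemma perm_ext (p : ℕ) (f g : Equiv.Perm (OnePoint (ZMod p)))
    (h1 : ∀ z : ZMod p, f (OnePoint.some z) = g (OnePoint.some z))
    (h2 : f OnePoint.infty = g OnePoint.infty) : f = g := by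
  ext x
  cases x with
  | infty => exact h2
  | coe z => exact h1 z

lemma ptrans_mul (p : ℕ) (a b : ZMod p) : ptrans p a * ptrans p b = ptrans p (a + b) := by
  refine perm_ext p _ _ (fun z => ?_) rfl
  show OnePoint.some (z + b + a) = OnePoint.some (z + (a + b))
  congr 1; ring

lemma ptrans_zero (p : ℕ) : ptrans p 0 = 1 := by
  refine perm_ext p _ _ (fun z => ?_) rfl
  show OnePoint.some (z + 0) = OnePoint.some z
  rw [add_zero]

lemma ptrans_pow (p : ℕ) (a : ZMod p) (n : ℕ) : (ptrans p a) ^ n = ptrans p (n * a) := by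
  induction n with
  | zero =>
    rw [pow_zero, Nat.cast_zero, zero_mul, ptrans_zero]
  | succ n ih =>
    rw [pow_succ, ih, ptrans_mul]
    congr 1
    push_cast
    ring

lemma pmul_mul (p : ℕ) [Fact p.Prime] (a b : ZMod p) (ha : a ≠ 0) (hb : b ≠ 0) :
    pmul p a ha * pmul p b hb = pmul p (a * b) (mul_ne_zero ha hb) := by
  refine perm_ext p _ _ (fun z => ?_) rfl
  show OnePoint.some (a * (b * z)) = OnePoint.some (a * b * z)
  rw [mul_assoc]

lemma pmul_one (p : ℕ) [Fact p.Prime] : pmul p 1 one_ne_zero = 1 := by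
  refine perm_ext p _ _ (fun z => ?_) rfl
  show OnePoint.some (1 * z) = OnePoint.some z
  rw [one_mul]

lemma pmul_eq_one_iff (p : ℕ) [Fact p.Prime] (a : ZMod p) (ha : a ≠ 0) :
    pmul p a ha = 1 ↔ a = 1 := by
  constructor
  · intro h
    have := congrArg (fun f : Equiv.Perm (OnePoint (ZMod p)) => f (OnePoint.some 1)) h
    simp only [pmul_some, Equiv.Perm.one_apply, mul_one] at this
    exact some_injective p this
  · rintro rfl; exact pmul_one p

lemma pmul_inv (p : ℕ) [Fact p.Prime] (a : ZMod p) (ha : a ≠ 0) :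
    (pmul p a ha)⁻¹ = pmul p a⁻¹ (inv_ne_zero ha) := by
  refine inv_eq_of_mul_eq_one_right ?_
  rw [pmul_mul, pmul_eq_one_iff]
  exact mul_inv_cancel₀ ha

lemma orderOf_ptrans_one (p : ℕ) [Fact p.Prime] : orderOf (ptrans p 1) = p := by
  have hp := (Fact.out : p.Prime)
  have h1 : (ptrans p 1) ^ p = 1 := by
    rw [ptrans_pow]
    simp [ZMod.natCast_self]
    refine perm_ext p _ _ (fun z => ?_) rfl
    simp
  have h2 : ptrans p 1 ≠ 1 := by
    intro h
    have := congrArg (fun f : Equiv.Perm (OnePoint (ZMod p)) => f (OnePoint.some 0)) h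
    simp only [ptrans_some, Equiv.Perm.one_apply, zero_add] at this
    have : (1 : ZMod p) = 0 := some_injective p this
    exact one_ne_zero this
  exact orderOf_eq_prime h1 h2



instance (X : Type*) [Fintype X] : Fintype (OnePoint X) :=
  inferInstanceAs (Fintype (Option X))

lemma arith1 (p : ℕ) (hp3 : p % 4 = 3) : (p ^ 3 - p) / 2 = (p + 1) * p * ((p - 1) / 2) := by
  obtain ⟨m, rfl⟩ : ∃ m, p = 2 * m + 1 := ⟨(p - 1) / 2, by omega⟩
  have h1 : (2 * m + 1 - 1) / 2 = m := by omega
  have h2 : (2 * m + 1) ^ 3 = ((2 * m + 1 + 1) * (2 * m + 1) * m) * 2 + (2 * m + 1) := by ring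
  rw [h1]
  omega

lemma card_onepoint (p : ℕ) [Fact p.Prime] : Nat.card (OnePoint (ZMod p)) = p + 1 := by
  have : Fintype.card (OnePoint (ZMod p)) = Fintype.card (ZMod p) + 1 := Fintype.card_option
  rw [Nat.card_eq_fintype_card, this, ZMod.card]

section

variable (p : ℕ) [Fact p.Prime] (G : Subgroup (Equiv.Perm (OnePoint (ZMod p))))

lemma card_stab_infty
    (htrans : ∀ x y : OnePoint (ZMod p), ∃ g ∈ G, g x = y)
    (hcard : Nat.card G = (p ^ 3 - p) / 2) (hp3 : p % 4 = 3) :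
    Nat.card (MulAction.stabilizer G (OnePoint.infty : OnePoint (ZMod p))) = p * ((p - 1) / 2) := by
  classical
  letI : Fintype G := Fintype.ofFinite _
  have horb : MulAction.orbit G (OnePoint.infty : OnePoint (ZMod p)) = Set.univ := by
    ext x
    simp only [Set.mem_univ, iff_true]
    obtain ⟨g, hg, hgx⟩ := htrans OnePoint.infty x
    exact ⟨⟨g, hg⟩, hgx⟩
  have h := MulAction.card_orbit_mul_card_stabilizer_eq_card_group G
    (OnePoint.infty : OnePoint (ZMod p))
  rw [← Nat.card_eq_fintype_card, ← Nat.card_eq_fintype_card,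
    ← Nat.card_eq_fintype_card, horb, Nat.card_univ, card_onepoint, hcard, arith1 p hp3] at h
  have h' : (p + 1) * Nat.card (MulAction.stabilizer G (OnePoint.infty : OnePoint (ZMod p)))
      = (p + 1) * (p * ((p - 1) / 2)) := by rw [h]; ring
  exact Nat.eq_of_mul_eq_mul_left (by omega) h'

end


section

variable (p : ℕ) [Fact p.Prime] (G : Subgroup (Equiv.Perm (OnePoint (ZMod p))))

lemma card_stab2
    (htrans : ∀ x y : OnePoint (ZMod p), ∃ g ∈ G, g x = y)
    (hcard : Nat.card G = (p ^ 3 - p) / 2) (hp3 : p % 4 = 3)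
    (htransl : ∀ a : ZMod p, ptrans p a ∈ G) :
    Nat.card (MulAction.stabilizer (MulAction.stabilizer G (OnePoint.infty : OnePoint (ZMod p)))
      (OnePoint.some (0 : ZMod p))) = (p - 1) / 2 := by
  classical
  set A := MulAction.stabilizer G (OnePoint.infty : OnePoint (ZMod p)) with hA
  have hcA : Nat.card A = p * ((p - 1) / 2) := card_stab_infty p G htrans hcard hp3
  letI : Fintype A := Fintype.ofFinite _
  have hsmul : ∀ (a : A) (x : OnePoint (ZMod p)),
      a • x = ((a : G) : Equiv.Perm (OnePoint (ZMod p))) x := fun _ _ => rfl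
  have hfix : ∀ a : A, ((a : G) : Equiv.Perm (OnePoint (ZMod p))) OnePoint.infty
      = OnePoint.infty := fun a => a.2
  have horb : MulAction.orbit A (OnePoint.some (0 : ZMod p))
      = Set.range (OnePoint.some : ZMod p → OnePoint (ZMod p)) := by
    ext x
    constructor
    · rintro ⟨a, rfl⟩
      show ((a : G) : Equiv.Perm (OnePoint (ZMod p))) (OnePoint.some (0:ZMod p)) ∈ _
      rcases h : ((a : G) : Equiv.Perm (OnePoint (ZMod p))) (OnePoint.some (0 : ZMod p)) with _ | z
      · exact absurd (((a : G) : Equiv.Perm (OnePoint (ZMod p))).injective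
          (h.trans (hfix a).symm)) (by simp [OnePoint.infty, OnePoint.some])
      · exact ⟨z, rfl⟩
    · rintro ⟨z, rfl⟩
      refine ⟨⟨⟨ptrans p z, htransl z⟩, ?_⟩, ?_⟩
      · show ptrans p z OnePoint.infty = OnePoint.infty
        rfl
      · show ptrans p z (OnePoint.some 0) = OnePoint.some z
        rw [ptrans_some p z 0, zero_add]
  have h := MulAction.card_orbit_mul_card_stabilizer_eq_card_group A
    (OnePoint.some (0 : ZMod p))
  rw [← Nat.card_eq_fintype_card, ← Nat.card_eq_fintype_card, ← Nat.card_eq_fintype_card,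
    horb, Nat.card_range_of_injective (some_injective p), Nat.card_zmod, hcA] at h
  have hple := (Fact.out : p.Prime).two_le
  exact Nat.eq_of_mul_eq_mul_left (by omega) h

end


section

variable (p : ℕ) [Fact p.Prime] (G : Subgroup (Equiv.Perm (OnePoint (ZMod p))))

lemma fix2_pmul
    (htrans : ∀ x y : OnePoint (ZMod p), ∃ g ∈ G, g x = y)
    (hcard : Nat.card G = (p ^ 3 - p) / 2) (hp3 : p % 4 = 3)
    (htransl : ∀ a : ZMod p, ptrans p a ∈ G) :
    ∀ g : Equiv.Perm (OnePoint (ZMod p)), g ∈ G → g OnePoint.infty = OnePoint.infty →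
      g (OnePoint.some (0 : ZMod p)) = OnePoint.some (0 : ZMod p) →
      ∃ (c : ZMod p) (hc : c ≠ 0), g = pmul p c hc := by
  classical
  have hp := (Fact.out : p.Prime)
  intro g hg hginf hg0
  set A := MulAction.stabilizer G (OnePoint.infty : OnePoint (ZMod p)) with hA
  have hcA : Nat.card A = p * ((p - 1) / 2) := card_stab_infty p G htrans hcard hp3
  -- the translation generator inside A
  have htmem : ∀ a : ZMod p, (⟨ptrans p a, htransl a⟩ : G) ∈ A := by
    intro a
    show ptrans p a • (OnePoint.infty : OnePoint (ZMod p)) = OnePoint.infty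
    rfl
  set t1 : A := ⟨⟨ptrans p 1, htransl 1⟩, htmem 1⟩ with ht1
  have hord : orderOf t1 = p := by
    have e1 : orderOf (A.subtype t1) = orderOf t1 :=
      orderOf_injective A.subtype A.subtype_injective t1
    have e2 : orderOf (G.subtype (A.subtype t1)) = orderOf (A.subtype t1) :=
      orderOf_injective G.subtype G.subtype_injective _
    have e3 : G.subtype (A.subtype t1) = ptrans p 1 := rfl
    rw [← e1, ← e2, e3, orderOf_ptrans_one]
  have hm0 : (p - 1) / 2 ≠ 0 := by
    have := hp.two_le; omega
  have hmlt : (p - 1) / 2 < p := by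
    have := hp.two_le; omega
  have hfact : (Nat.card A).factorization p = 1 := by
    rw [hcA, Nat.factorization_mul hp.pos.ne' hm0]
    have h1 : p.factorization p = 1 := hp.factorization_self
    have h2 : ((p - 1) / 2).factorization p = 0 :=
      Nat.factorization_eq_zero_of_not_dvd (fun hdvd => by
        have := Nat.le_of_dvd (Nat.pos_of_ne_zero hm0) hdvd
        omega)
    simp [h1, h2]
  have hTcard : Nat.card (Subgroup.zpowers t1) = p ^ (Nat.card A).factorization p := by
    rw [hfact, pow_one, Nat.card_zpowers, hord]
  set P : Sylow p A := Sylow.ofCard (Subgroup.zpowers t1) hTcard with hP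
  have hPT : (P : Subgroup A) = Subgroup.zpowers t1 := Sylow.coe_ofCard _ _
  -- index of P is (p-1)/2
  have hPcard : Nat.card (P : Subgroup A) = p := by rw [hPT, Nat.card_zpowers, hord]
  have hPindex : (P : Subgroup A).index = (p - 1) / 2 := by
    have h := Subgroup.card_mul_index (P : Subgroup A)
    rw [hPcard, hcA] at h
    exact Nat.eq_of_mul_eq_mul_left hp.pos h
  -- unique Sylow
  have hn1 : Nat.card (Sylow p A) = 1 := by
    have h1 := card_sylow_modEq_one p A
    have h2 := Sylow.card_dvd_index P
    rw [hPindex] at h2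
    have h3 : Nat.card (Sylow p A) ≤ (p - 1) / 2 :=
      Nat.le_of_dvd (Nat.pos_of_ne_zero hm0) h2
    have h4 : Nat.card (Sylow p A) % p = 1 % p := h1
    rw [Nat.mod_eq_of_lt (lt_of_le_of_lt h3 hmlt), Nat.mod_eq_of_lt hp.one_lt] at h4
    exact h4
  have hsub : Subsingleton (Sylow p A) := (Nat.card_eq_one_iff_unique.mp hn1).1
  -- g as an element of A
  have hbmem : (⟨g, hg⟩ : G) ∈ A := by
    show g • (OnePoint.infty : OnePoint (ZMod p)) = OnePoint.infty
    exact hginf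
  set b : A := ⟨⟨g, hg⟩, hbmem⟩ with hb
  have hbnorm : b ∈ Subgroup.normalizer (P : Set A) := by
    rw [← Sylow.smul_eq_iff_mem_normalizer]
    exact hsub.elim _ _
  have ht1P : t1 ∈ (P : Subgroup A) := by rw [hPT]; exact Subgroup.mem_zpowers t1
  have hconj : b * t1 * b⁻¹ ∈ (P : Subgroup A) :=
    (Subgroup.mem_normalizer_iff.mp hbnorm t1).mp ht1P
  rw [hPT] at hconj
  have hfin : IsOfFinOrder t1 := isOfFinOrder_of_finite t1
  obtain ⟨k, hk⟩ := (Submonoid.mem_powers_iff _ _).mp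
    (hfin.mem_powers_iff_mem_zpowers.mpr hconj)
  -- conjugation formula for powers
  have hconjpow : ∀ j : ℕ, b * t1 ^ j * b⁻¹ = t1 ^ (k * j) := by
    intro j
    have := map_pow (MulAut.conj b) t1 j
    simp only [MulAut.conj_apply] at this
    rw [this, ← hk, ← pow_mul]
  -- project to permutations
  have hperm : ∀ j : ℕ, g * (ptrans p 1) ^ j * g⁻¹ = (ptrans p 1) ^ (k * j) := by
    intro j
    have := congrArg (fun x : A => ((x : G) : Equiv.Perm (OnePoint (ZMod p)))) (hconjpow j)
    simpa using this
  set c : ZMod p := (k : ZMod p) with hc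
  have hgval : ∀ a : ZMod p, g (OnePoint.some a) = OnePoint.some (c * a) := by
    intro a
    have h1 := hperm a.val
    rw [ptrans_pow, ptrans_pow] at h1
    have h2 : ((a.val : ℕ) : ZMod p) = a := by
      rw [ZMod.natCast_val, ZMod.cast_id]
    have e : ptrans p ((a.val : ZMod p) * 1) = ptrans p a := by rw [mul_one, h2]
    have e2 : ptrans p (((k * a.val : ℕ) : ZMod p) * 1) = ptrans p (c * a) := by
      congr 1
      push_cast
      rw [mul_one, h2, ← hc]
    have h3 : g * ptrans p a * g⁻¹ = ptrans p (c * a) := by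
      rw [← e, ← e2]; exact h1
    have h4 := congrArg (fun f : Equiv.Perm (OnePoint (ZMod p)) =>
      f (OnePoint.some (0 : ZMod p))) h3
    simp only [Equiv.Perm.mul_apply] at h4
    have h5 : g⁻¹ (OnePoint.some (0 : ZMod p)) = OnePoint.some (0 : ZMod p) := by
      apply g.injective
      rw [Equiv.Perm.coe_inv, Equiv.apply_symm_apply, hg0]
    rw [h5] at h4
    rw [ptrans_some, ptrans_some, zero_add, zero_add] at h4
    exact h4
  have hcne : c ≠ 0 := by
    intro h0
    have h1 := hgval 1
    rw [h0, zero_mul, ← hg0] at h1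
    have := g.injective h1
    exact one_ne_zero (some_injective p this)
  refine ⟨c, hcne, ?_⟩
  refine perm_ext p _ _ (fun z => ?_) ?_
  · rw [hgval z, pmul_some]
  · rw [hginf]; rfl

end

section

variable (p : ℕ) [Fact p.Prime] (G : Subgroup (Equiv.Perm (OnePoint (ZMod p))))

lemma pmul_congr (a b : ZMod p) (ha : a ≠ 0) (hb : b ≠ 0) (h : a = b) :
    pmul p a ha = pmul p b hb := by subst h; rfl

/-- The subgroup of units `u` such that multiplication by `u` lies in `G`. -/
def Cu : Subgroup (ZMod p)ˣ where
  carrier := {u | pmul p (u : ZMod p) u.ne_zero ∈ G}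
  mul_mem' := by
    intro a b ha hb
    have h : pmul p ((a * b : (ZMod p)ˣ) : ZMod p) (a * b).ne_zero
        = pmul p (a : ZMod p) a.ne_zero * pmul p (b : ZMod p) b.ne_zero := by
      rw [pmul_mul]
      exact pmul_congr p _ _ _ _ (Units.val_mul a b)
    show pmul p ((a * b : (ZMod p)ˣ) : ZMod p) (a * b).ne_zero ∈ G
    rw [h]
    exact mul_mem ha hb
  one_mem' := by
    show pmul p ((1 : (ZMod p)ˣ) : ZMod p) _ ∈ G
    have h : pmul p ((1 : (ZMod p)ˣ) : ZMod p) (1 : (ZMod p)ˣ).ne_zero = 1 := by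
      rw [pmul_congr p _ 1 _ one_ne_zero Units.val_one, pmul_one]
    rw [h]
    exact one_mem G
  inv_mem' := by
    intro a ha
    show pmul p ((a⁻¹ : (ZMod p)ˣ) : ZMod p) _ ∈ G
    have h : pmul p ((a⁻¹ : (ZMod p)ˣ) : ZMod p) (a⁻¹).ne_zero
        = (pmul p (a : ZMod p) a.ne_zero)⁻¹ := by
      rw [pmul_inv]
      exact pmul_congr p _ _ _ _ (Units.val_inv_eq_inv_val a)
    rw [h]
    exact inv_mem ha

lemma card_Cu
    (htrans : ∀ x y : OnePoint (ZMod p), ∃ g ∈ G, g x = y)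
    (hcard : Nat.card G = (p ^ 3 - p) / 2) (hp3 : p % 4 = 3)
    (htransl : ∀ a : ZMod p, ptrans p a ∈ G) :
    Nat.card (Cu p G) = (p - 1) / 2 := by
  classical
  -- the subtype of `G`-elements fixing `∞` and `0`
  have E : MulAction.stabilizer (MulAction.stabilizer G (OnePoint.infty : OnePoint (ZMod p)))
      (OnePoint.some (0 : ZMod p)) ≃
      {g : Equiv.Perm (OnePoint (ZMod p)) // g ∈ G ∧ g OnePoint.infty = OnePoint.infty ∧
        g (OnePoint.some (0 : ZMod p)) = OnePoint.some (0 : ZMod p)} := by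
    refine ⟨fun x => ⟨x.1.1.1, x.1.1.2, x.1.2, x.2⟩, fun g => ⟨⟨⟨g.1, g.2.1⟩, g.2.2.1⟩, g.2.2.2⟩,
      fun x => rfl, fun g => rfl⟩
  have hS : Nat.card {g : Equiv.Perm (OnePoint (ZMod p)) // g ∈ G ∧
      g OnePoint.infty = OnePoint.infty ∧
      g (OnePoint.some (0 : ZMod p)) = OnePoint.some (0 : ZMod p)} = (p - 1) / 2 := by
    rw [← Nat.card_congr E]
    exact card_stab2 p G htrans hcard hp3 htransl
  rw [← hS]
  apply Nat.card_eq_of_bijective (fun u =>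
    ⟨pmul p ((u : (ZMod p)ˣ) : ZMod p) (u : (ZMod p)ˣ).ne_zero, u.2, rfl, by
      rw [pmul_some]; rw [mul_zero]⟩)
  constructor
  · intro u v huv
    have h1 := congrArg (fun g => g.1 (OnePoint.some (1 : ZMod p))) huv
    simp only [pmul_some, mul_one] at h1
    have := some_injective p h1
    exact Subtype.ext (Units.ext this)
  · rintro ⟨g, hg, hginf, hg0⟩
    obtain ⟨c, hc, rfl⟩ := fix2_pmul p G htrans hcard hp3 htransl g hg hginf hg0
    refine ⟨⟨Units.mk0 c hc, ?_⟩, ?_⟩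
    · show pmul p ((Units.mk0 c hc : (ZMod p)ˣ) : ZMod p) _ ∈ G
      exact hg
    · exact Subtype.ext rfl

end

section

variable (p : ℕ) [Fact p.Prime] (G : Subgroup (Equiv.Perm (OnePoint (ZMod p))))

/-- `c` acts on `ℤ/p ∪ {∞}` by multiplication inside `G`. -/
def inG (c : ZMod p) : Prop := ∃ hc : c ≠ 0, pmul p c hc ∈ G

lemma inG_ne_zero {c : ZMod p} (h : inG p G c) : c ≠ 0 := h.1

lemma inG_iff_mem_Cu (c : ZMod p) (hc : c ≠ 0) : inG p G c ↔ Units.mk0 c hc ∈ Cu p G := by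
  constructor
  · rintro ⟨hc', hm⟩
    exact hm
  · intro hm
    exact ⟨hc, hm⟩

lemma mem_Cu_iff_inG (u : (ZMod p)ˣ) : u ∈ Cu p G ↔ inG p G (u : ZMod p) := by
  rw [inG_iff_mem_Cu p G _ u.ne_zero]
  constructor
  · intro h; exact (by exact h : Units.mk0 (u : ZMod p) u.ne_zero ∈ Cu p G)
  · intro h
    have : Units.mk0 (u : ZMod p) u.ne_zero = u := Units.ext rfl
    rwa [this] at h

lemma inG_mul (a b : ZMod p) (ha : inG p G a) (hb : inG p G b) : inG p G (a * b) := by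
  obtain ⟨ha0, hma⟩ := ha
  obtain ⟨hb0, hmb⟩ := hb
  refine ⟨mul_ne_zero ha0 hb0, ?_⟩
  rw [← pmul_mul p a b ha0 hb0]
  exact mul_mem hma hmb

lemma inG_inv (a : ZMod p) (ha : inG p G a) : inG p G a⁻¹ := by
  obtain ⟨ha0, hma⟩ := ha
  refine ⟨inv_ne_zero ha0, ?_⟩
  rw [← pmul_inv p a ha0]
  exact inv_mem hma

lemma inG_one : inG p G 1 := ⟨one_ne_zero, by rw [pmul_one]; exact one_mem G⟩

variable (htrans : ∀ x y : OnePoint (ZMod p), ∃ g ∈ G, g x = y)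
  (hcard : Nat.card G = (p ^ 3 - p) / 2) (hp3 : p % 4 = 3)
  (htransl : ∀ a : ZMod p, ptrans p a ∈ G)

include htrans hcard hp3 htransl

lemma Cu_index : (Cu p G).index = 2 := by
  have h := Subgroup.card_mul_index (Cu p G)
  rw [card_Cu p G htrans hcard hp3 htransl] at h
  have hu : Nat.card (ZMod p)ˣ = p - 1 := by
    rw [Nat.card_eq_fintype_card, ZMod.card_units]
  rw [hu] at h
  have hm0 : (p - 1) / 2 ≠ 0 := by have := (Fact.out : p.Prime).two_le; omega
  have h2 : (p - 1) / 2 * (Cu p G).index = (p - 1) / 2 * 2 := by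
    rw [h]; omega
  exact Nat.eq_of_mul_eq_mul_left (Nat.pos_of_ne_zero hm0) h2

lemma inG_mul_iff (a b : ZMod p) (ha : a ≠ 0) (hb : b ≠ 0) :
    inG p G (a * b) ↔ (inG p G a ↔ inG p G b) := by
  have hab : a * b ≠ 0 := mul_ne_zero ha hb
  rw [inG_iff_mem_Cu p G _ hab, inG_iff_mem_Cu p G a ha, inG_iff_mem_Cu p G b hb]
  have : Units.mk0 (a * b) hab = Units.mk0 a ha * Units.mk0 b hb := Units.ext rfl
  rw [this]
  exact Subgroup.mul_mem_iff_of_index_two (Cu_index p G htrans hcard hp3 htransl)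

lemma inG_neg_one : ¬ inG p G (-1) := by
  intro h
  have hne : (-1 : ZMod p) ≠ 0 := h.1
  have hmem : Units.mk0 (-1 : ZMod p) hne ∈ Cu p G := (inG_iff_mem_Cu p G _ hne).mp h
  have hu : Units.mk0 (-1 : ZMod p) hne = (-1 : (ZMod p)ˣ) := Units.ext (by
    rw [Units.val_neg, Units.val_one]; rfl)
  rw [hu] at hmem
  set x : Cu p G := ⟨-1, hmem⟩ with hx
  have h1 : x ^ Nat.card (Cu p G) = 1 := pow_card_eq_one'
  rw [card_Cu p G htrans hcard hp3 htransl] at h1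
  have hodd : Odd ((p - 1) / 2) := by
    rw [Nat.odd_iff]; omega
  have h2 : ((x ^ ((p - 1) / 2) : Cu p G) : (ZMod p)ˣ) = (-1 : (ZMod p)ˣ) ^ ((p - 1) / 2) := by
    rw [SubgroupClass.coe_pow]
  rw [h1, hodd.neg_one_pow] at h2
  have h3 : ((-1 : (ZMod p)ˣ) : ZMod p) = ((1 : (ZMod p)ˣ) : ZMod p) := by rw [← h2]; rfl
  rw [Units.val_neg, Units.val_one] at h3
  have h4 : ((2 : ℕ) : ZMod p) = 0 := by push_cast; linear_combination -h3
  have h5 : (p : ℕ) ∣ 2 := (CharP.cast_eq_zero_iff (ZMod p) p 2).mp h4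
  have := Nat.le_of_dvd (by norm_num) h5
  omega

lemma inG_neg_of_not (a : ZMod p) (ha : a ≠ 0) (h : ¬ inG p G a) : inG p G (-a) := by
  have hne : (-1 : ZMod p) ≠ 0 := by
    intro h0
    have : (1 : ZMod p) = 0 := by linear_combination -h0
    exact one_ne_zero this
  have := inG_mul_iff p G htrans hcard hp3 htransl (-1) a hne ha
  rw [neg_one_mul] at this
  rw [this]
  constructor
  · intro h1; exact absurd h1 (inG_neg_one p G htrans hcard hp3 htransl)
  · intro h1; exact absurd h1 h

lemma inG_sqrt (w : ZMod p) (hw : inG p G w) :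
    ∃! c : ZMod p, inG p G c ∧ c * c = w := by
  have hw0 : w ≠ 0 := hw.1
  have hco : Nat.Coprime (Nat.card (Cu p G)) 2 := by
    rw [card_Cu p G htrans hcard hp3 htransl, Nat.coprime_two_right]
    rw [Nat.odd_iff]
    omega
  set W : Cu p G := ⟨Units.mk0 w hw0, (inG_iff_mem_Cu p G w hw0).mp hw⟩ with hW
  obtain ⟨x, hx⟩ := hco.pow_left_bijective.2 W
  refine ⟨((x : (ZMod p)ˣ) : ZMod p), ⟨?_, ?_⟩, ?_⟩
  · exact (mem_Cu_iff_inG p G _).mp x.2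
  · have := congrArg (fun y : Cu p G => ((y : (ZMod p)ˣ) : ZMod p)) hx
    simp only [SubgroupClass.coe_pow, Units.val_pow_eq_pow_val] at this
    rw [← pow_two]
    exact this
  · rintro c ⟨hcG, hcc⟩
    have hc0 : c ≠ 0 := hcG.1
    set X : Cu p G := ⟨Units.mk0 c hc0, (inG_iff_mem_Cu p G c hc0).mp hcG⟩ with hX
    have hX2 : X ^ 2 = W := by
      apply Subtype.ext
      apply Units.ext
      show ((X ^ 2 : Cu p G) : (ZMod p)ˣ).val = w
      rw [SubgroupClass.coe_pow, Units.val_pow_eq_pow_val]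
      show c ^ 2 = w
      rw [pow_two]; exact hcc
    have heq : X = x := hco.pow_left_bijective.1 (hX2.trans hx.symm)
    have := congrArg (fun y : Cu p G => ((y : (ZMod p)ˣ) : ZMod p)) heq
    exact this

end

section

variable (p : ℕ) [Fact p.Prime] (G : Subgroup (Equiv.Perm (OnePoint (ZMod p))))

/-- Values of an element interchanging `0` and `∞` on nonzero points are nonzero points. -/
lemma Kval (lam : Equiv.Perm (OnePoint (ZMod p)))
    (h0 : lam (OnePoint.some (0 : ZMod p)) = OnePoint.infty)
    (hinf : lam OnePoint.infty = OnePoint.some (0 : ZMod p))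
    (z : ZMod p) (hz : z ≠ 0) :
    ∃ w : ZMod p, w ≠ 0 ∧ lam (OnePoint.some z) = OnePoint.some w := by
  rcases h : lam (OnePoint.some z) with _ | w
  · exfalso
    have := lam.injective (h.trans h0.symm)
    exact hz (some_injective p this)
  · refine ⟨w, ?_, rfl⟩
    intro hw0
    subst hw0
    have := lam.injective (h.trans hinf.symm)
    simp [OnePoint.some, OnePoint.infty] at this

variable (htrans : ∀ x y : OnePoint (ZMod p), ∃ g ∈ G, g x = y)
  (hcard : Nat.card G = (p ^ 3 - p) / 2) (hp3 : p % 4 = 3)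
  (htransl : ∀ a : ZMod p, ptrans p a ∈ G)

include htrans hcard hp3 htransl

/-- Conjugation of a multiplication by an element interchanging `0` and `∞`. -/
lemma conj_vals (lam : Equiv.Perm (OnePoint (ZMod p))) (hlamG : lam ∈ G)
    (h0 : lam (OnePoint.some (0 : ZMod p)) = OnePoint.infty)
    (hinf : lam OnePoint.infty = OnePoint.some (0 : ZMod p))
    (c : ZMod p) (hc : inG p G c) :
    ∃ c' : ZMod p, inG p G c' ∧ ∀ z w : ZMod p,
      lam (OnePoint.some z) = OnePoint.some w →
      lam (OnePoint.some (c * z)) = OnePoint.some (c' * w) := by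
  obtain ⟨hc0, hcm⟩ := hc
  have hinv_inf : lam⁻¹ OnePoint.infty = OnePoint.some (0 : ZMod p) := by
    apply lam.injective
    rw [Equiv.Perm.coe_inv, Equiv.apply_symm_apply, h0]
  have hinv_0 : lam⁻¹ (OnePoint.some (0 : ZMod p)) = OnePoint.infty := by
    apply lam.injective
    rw [Equiv.Perm.coe_inv, Equiv.apply_symm_apply, hinf]
  set g := lam * pmul p c hc0 * lam⁻¹ with hg
  have hgG : g ∈ G := mul_mem (mul_mem hlamG hcm) (inv_mem hlamG)
  have hg_inf : g OnePoint.infty = OnePoint.infty := by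
    show lam (pmul p c hc0 (lam⁻¹ OnePoint.infty)) = OnePoint.infty
    rw [hinv_inf, pmul_some, mul_zero, h0]
  have hg_0 : g (OnePoint.some (0 : ZMod p)) = OnePoint.some (0 : ZMod p) := by
    show lam (pmul p c hc0 (lam⁻¹ (OnePoint.some (0 : ZMod p)))) = OnePoint.some (0 : ZMod p)
    rw [hinv_0, pmul_infty, hinf]
  obtain ⟨c', hc'0, hgc'⟩ := fix2_pmul p G htrans hcard hp3 htransl g hgG hg_inf hg_0
  refine ⟨c', ⟨hc'0, by rw [← hgc']; exact hgG⟩, ?_⟩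
  intro z w hzw
  have happ := congrArg (fun f : Equiv.Perm (OnePoint (ZMod p)) => f (lam (OnePoint.some z))) hgc'
  simp only [hg] at happ
  show lam (pmul p c hc0 (OnePoint.some z)) = OnePoint.some (c' * w)
  calc lam (pmul p c hc0 (OnePoint.some z))
      = lam (pmul p c hc0 (lam⁻¹ (lam (OnePoint.some z)))) := by
        rw [Equiv.Perm.coe_inv, Equiv.symm_apply_apply]
    _ = (lam * pmul p c hc0 * lam⁻¹) (lam (OnePoint.some z)) := rfl
    _ = pmul p c' hc'0 (lam (OnePoint.some z)) := happ
    _ = OnePoint.some (c' * w) := by rw [hzw, pmul_some]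

/-- The key sign lemma : `-u v` is in the multiplier class. -/
lemma coset_neg (lam : Equiv.Perm (OnePoint (ZMod p))) (hlamG : lam ∈ G)
    (h0 : lam (OnePoint.some (0 : ZMod p)) = OnePoint.infty)
    (hinf : lam OnePoint.infty = OnePoint.some (0 : ZMod p))
    (u v : ZMod p) (hu : lam (OnePoint.some (1 : ZMod p)) = OnePoint.some u)
    (hv : lam (OnePoint.some (-1 : ZMod p)) = OnePoint.some v) :
    inG p G (-(u * v)) := by
  have hone : (1 : ZMod p) ≠ 0 := one_ne_zero
  have hnegone : (-1 : ZMod p) ≠ 0 := by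
    intro h
    exact one_ne_zero (by linear_combination -h : (1 : ZMod p) = 0)
  obtain ⟨u2, hu20, hu2⟩ := Kval p lam h0 hinf 1 hone
  obtain ⟨v2, hv20, hv2⟩ := Kval p lam h0 hinf (-1) hnegone
  have hu0 : u ≠ 0 := by
    have := some_injective p (hu.symm.trans hu2)
    rw [this]; exact hu20
  have hv0 : v ≠ 0 := by
    have := some_injective p (hv.symm.trans hv2)
    rw [this]; exact hv20
  have key : ¬ (inG p G u ↔ inG p G v) := by
    intro hiff
    have hnu : (-u : ZMod p) ≠ 0 := neg_ne_zero.mpr hu0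
    -- find preimage of -u
    rcases hzc : lam⁻¹ (OnePoint.some (-u)) with _ | z₀
    · have hzc' : lam⁻¹ (OnePoint.some (-u)) = OnePoint.infty := hzc
      have h1 : lam OnePoint.infty = OnePoint.some (-u) := by
        rw [← hzc', Equiv.Perm.coe_inv, Equiv.apply_symm_apply]
      rw [hinf] at h1
      exact hnu (some_injective p h1).symm
    have hzc' : lam⁻¹ (OnePoint.some (-u)) = OnePoint.some z₀ := hzc
    have hlz : lam (OnePoint.some z₀) = OnePoint.some (-u) := by
      rw [← hzc', Equiv.Perm.coe_inv, Equiv.apply_symm_apply]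
    have hz00 : z₀ ≠ 0 := by
      intro h
      subst h
      rw [h0] at hlz
      simp [OnePoint.some, OnePoint.infty] at hlz
    by_cases hzG : inG p G z₀
    · obtain ⟨c', hc'G, hmap⟩ :=
        conj_vals p G htrans hcard hp3 htransl lam hlamG h0 hinf z₀ hzG
      have h2 := hmap 1 u hu
      rw [mul_one] at h2
      have h3 : -u = c' * u := some_injective p (hlz.symm.trans h2)
      have hc' : c' = -1 := by
        apply mul_right_cancel₀ hu0
        rw [← h3]; ring
      rw [hc'] at hc'G
      exact inG_neg_one p G htrans hcard hp3 htransl hc'G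
    · have hzG' : inG p G (-z₀) := inG_neg_of_not p G htrans hcard hp3 htransl z₀ hz00 hzG
      obtain ⟨c', hc'G, hmap⟩ :=
        conj_vals p G htrans hcard hp3 htransl lam hlamG h0 hinf (-z₀) hzG'
      have h2 := hmap (-1) v hv
      have he : (-z₀) * (-1) = z₀ := by ring
      rw [he] at h2
      have h3 : -u = c' * v := some_injective p (hlz.symm.trans h2)
      -- u = (-1) * (c' * v)
      have h4 : u = (-1) * (c' * v) := by linear_combination -h3
      have hc'0 : c' ≠ 0 := hc'G.1
      have h5 : inG p G ((-1) * (c' * v)) ↔ (inG p G (-1) ↔ inG p G (c' * v)) :=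
        inG_mul_iff p G htrans hcard hp3 htransl (-1) (c' * v) hnegone (mul_ne_zero hc'0 hv0)
      have h6 : inG p G (c' * v) ↔ (inG p G c' ↔ inG p G v) :=
        inG_mul_iff p G htrans hcard hp3 htransl c' v hc'0 hv0
      have h7 := inG_neg_one p G htrans hcard hp3 htransl
      rw [← h4] at h5
      tauto
  have h8 : inG p G (u * v) ↔ (inG p G u ↔ inG p G v) :=
    inG_mul_iff p G htrans hcard hp3 htransl u v hu0 hv0
  have hnegone : (-1 : ZMod p) ≠ 0 := by
    intro h
    exact one_ne_zero (by linear_combination -h : (1 : ZMod p) = 0)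
  have h9 : inG p G ((-1) * (u * v)) ↔ (inG p G (-1) ↔ inG p G (u * v)) :=
    inG_mul_iff p G htrans hcard hp3 htransl (-1) (u * v) hnegone (mul_ne_zero hu0 hv0)
  have h10 := inG_neg_one p G htrans hcard hp3 htransl
  have h11 : -(u * v) = (-1) * (u * v) := by ring
  rw [h11]
  tauto

end

theorem main
    (p : ℕ) [Fact p.Prime] (hp2 : p ≠ 2) (hp3 : p % 4 = 3)
    (G : Subgroup (Equiv.Perm (OnePoint (ZMod p))))
    (htrans : ∀ x y : OnePoint (ZMod p), ∃ g ∈ G, g x = y)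
    (hcard : Nat.card G = (p ^ 3 - p) / 2)
    (htransl : ∀ a : ZMod p, ptrans p a ∈ G) :
    ∃ lam : Equiv.Perm (OnePoint (ZMod p)),
      (lam ∈ G ∧ lam (OnePoint.some (0 : ZMod p)) = OnePoint.infty ∧
        lam OnePoint.infty = OnePoint.some (0 : ZMod p) ∧
        ∃ u v : ZMod p, lam (OnePoint.some (1 : ZMod p)) = OnePoint.some u ∧
          lam (OnePoint.some (-1 : ZMod p)) = OnePoint.some v ∧ -(u * v) = 1) ∧
      orderOf lam = 2 ∧
      ∀ lam' : Equiv.Perm (OnePoint (ZMod p)),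
        (lam' ∈ G ∧ lam' (OnePoint.some (0 : ZMod p)) = OnePoint.infty ∧
          lam' OnePoint.infty = OnePoint.some (0 : ZMod p) ∧
          ∃ u v : ZMod p, lam' (OnePoint.some (1 : ZMod p)) = OnePoint.some u ∧
            lam' (OnePoint.some (-1 : ZMod p)) = OnePoint.some v ∧ -(u * v) = 1) →
        lam' = lam := by
  have hone : (1 : ZMod p) ≠ 0 := one_ne_zero
  have hnegone : (-1 : ZMod p) ≠ 0 := by
    intro h
    exact one_ne_zero (by linear_combination -h : (1 : ZMod p) = 0)
  -- construct τ interchanging 0 and ∞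
  obtain ⟨g0, hg0G, hg00⟩ := htrans (OnePoint.some (0 : ZMod p)) OnePoint.infty
  obtain ⟨τ, hτG, hτ0, hτinf⟩ : ∃ τ : Equiv.Perm (OnePoint (ZMod p)), τ ∈ G ∧
      τ (OnePoint.some (0 : ZMod p)) = OnePoint.infty ∧
      τ OnePoint.infty = OnePoint.some (0 : ZMod p) := by
    rcases hb : g0 OnePoint.infty with _ | b₀
    · exfalso
      have hb' : g0 OnePoint.infty = OnePoint.infty := hb
      have := g0.injective (hg00.trans hb'.symm)
      simp [OnePoint.some, OnePoint.infty] at this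
    · have hb' : g0 OnePoint.infty = OnePoint.some b₀ := hb
      refine ⟨ptrans p (-b₀) * g0, mul_mem (htransl _) hg0G, ?_, ?_⟩
      · show ptrans p (-b₀) (g0 (OnePoint.some (0 : ZMod p))) = OnePoint.infty
        rw [hg00]; rfl
      · show ptrans p (-b₀) (g0 OnePoint.infty) = OnePoint.some (0 : ZMod p)
        rw [hb', ptrans_some, add_neg_cancel]
  -- values of τ
  obtain ⟨x₀, hx₀0, hx₀⟩ := Kval p τ hτ0 hτinf 1 hone
  obtain ⟨y₀, hy₀0, hy₀⟩ := Kval p τ hτ0 hτinf (-1) hnegone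
  have hw₀ : inG p G (-(x₀ * y₀)) :=
    coset_neg p G htrans hcard hp3 htransl τ hτG hτ0 hτinf x₀ y₀ hx₀ hy₀
  have hw₀0 : -(x₀ * y₀) ≠ 0 := hw₀.1
  have hw : inG p G (-(x₀ * y₀))⁻¹ := inG_inv p G _ hw₀
  obtain ⟨c₀, ⟨hc₀G, hc₀sq⟩, hc₀uniq⟩ := inG_sqrt p G htrans hcard hp3 htransl _ hw
  obtain ⟨hc₀0, hc₀m⟩ := hc₀G
  set lam := pmul p c₀ hc₀0 * τ with hlam
  have hlamG : lam ∈ G := mul_mem hc₀m hτG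
  have hlam0 : lam (OnePoint.some (0 : ZMod p)) = OnePoint.infty := by
    show pmul p c₀ hc₀0 (τ (OnePoint.some (0 : ZMod p))) = OnePoint.infty
    rw [hτ0]; rfl
  have hlaminf : lam OnePoint.infty = OnePoint.some (0 : ZMod p) := by
    show pmul p c₀ hc₀0 (τ OnePoint.infty) = OnePoint.some (0 : ZMod p)
    rw [hτinf, pmul_some, mul_zero]
  have hlamu : lam (OnePoint.some (1 : ZMod p)) = OnePoint.some (c₀ * x₀) := by
    show pmul p c₀ hc₀0 (τ (OnePoint.some (1 : ZMod p))) = OnePoint.some (c₀ * x₀)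
    rw [hx₀, pmul_some]
  have hlamv : lam (OnePoint.some (-1 : ZMod p)) = OnePoint.some (c₀ * y₀) := by
    show pmul p c₀ hc₀0 (τ (OnePoint.some (-1 : ZMod p))) = OnePoint.some (c₀ * y₀)
    rw [hy₀, pmul_some]
  have hcw : (c₀ * c₀) * (-(x₀ * y₀)) = 1 := by
    rw [hc₀sq]
    exact inv_mul_cancel₀ hw₀0
  have hprod : -((c₀ * x₀) * (c₀ * y₀)) = 1 := by linear_combination hcw
  -- the decomposition of an arbitrary element of K̄ through τ
  have hdecomp : ∀ lam' : Equiv.Perm (OnePoint (ZMod p)), lam' ∈ G →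
      lam' (OnePoint.some (0 : ZMod p)) = OnePoint.infty →
      lam' OnePoint.infty = OnePoint.some (0 : ZMod p) →
      ∃ (c : ZMod p) (hc : c ≠ 0), pmul p c hc ∈ G ∧ lam' = pmul p c hc * τ := by
    intro lam' hG' h0' hinf'
    have hτinv_inf : τ⁻¹ OnePoint.infty = OnePoint.some (0 : ZMod p) := by
      apply τ.injective; rw [Equiv.Perm.coe_inv, Equiv.apply_symm_apply, hτ0]
    have hτinv_0 : τ⁻¹ (OnePoint.some (0 : ZMod p)) = OnePoint.infty := by
      apply τ.injective; rw [Equiv.Perm.coe_inv, Equiv.apply_symm_apply, hτinf]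
    have h1 : (lam' * τ⁻¹) OnePoint.infty = OnePoint.infty := by
      show lam' (τ⁻¹ OnePoint.infty) = OnePoint.infty
      rw [hτinv_inf, h0']
    have h2 : (lam' * τ⁻¹) (OnePoint.some (0 : ZMod p)) = OnePoint.some (0 : ZMod p) := by
      show lam' (τ⁻¹ (OnePoint.some (0 : ZMod p))) = OnePoint.some (0 : ZMod p)
      rw [hτinv_0, hinf']
    obtain ⟨c, hc0, hc⟩ := fix2_pmul p G htrans hcard hp3 htransl (lam' * τ⁻¹)
      (mul_mem hG' (inv_mem hτG)) h1 h2
    refine ⟨c, hc0, by rw [← hc]; exact mul_mem hG' (inv_mem hτG), ?_⟩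
    rw [← hc, inv_mul_cancel_right]
  refine ⟨lam, ⟨hlamG, hlam0, hlaminf, c₀ * x₀, c₀ * y₀, hlamu, hlamv, hprod⟩, ?_, ?_⟩
  · -- order 2
    have hlamne : lam ≠ 1 := by
      intro h
      rw [h] at hlam0
      simp only [Equiv.Perm.one_apply] at hlam0
      simp [OnePoint.some, OnePoint.infty] at hlam0
    -- lam * lam = pmul d
    have hsq_inf : (lam * lam) OnePoint.infty = OnePoint.infty := by
      show lam (lam OnePoint.infty) = OnePoint.infty
      rw [hlaminf, hlam0]
    have hsq_0 : (lam * lam) (OnePoint.some (0 : ZMod p)) = OnePoint.some (0 : ZMod p) := by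
      show lam (lam (OnePoint.some (0 : ZMod p))) = OnePoint.some (0 : ZMod p)
      rw [hlam0, hlaminf]
    obtain ⟨d, hd0, hd⟩ := fix2_pmul p G htrans hcard hp3 htransl (lam * lam)
      (mul_mem hlamG hlamG) hsq_inf hsq_0
    have hdG : inG p G d := ⟨hd0, by rw [← hd]; exact mul_mem hlamG hlamG⟩
    set u := c₀ * x₀ with hu_def
    set v := c₀ * y₀ with hv_def
    have hu0 : u ≠ 0 := mul_ne_zero hc₀0 hx₀0
    have hv0 : v ≠ 0 := mul_ne_zero hc₀0 hy₀0
    have hvu : v = -u⁻¹ := by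
      field_simp
      linear_combination -hprod
    -- (lam * lam) values
    have hdd1 : lam (lam (OnePoint.some (1 : ZMod p))) = OnePoint.some (d * 1) := by
      rw [show lam (lam (OnePoint.some (1:ZMod p)))
          = (lam * lam) (OnePoint.some (1:ZMod p)) from rfl, hd, pmul_some]
    have hdd2 : lam (lam (OnePoint.some (-1 : ZMod p))) = OnePoint.some (d * (-1)) := by
      rw [show lam (lam (OnePoint.some (-1:ZMod p)))
          = (lam * lam) (OnePoint.some (-1:ZMod p)) from rfl, hd, pmul_some]
    have hd_eq : d * d = 1 := by
      by_cases hcase : inG p G u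
      · obtain ⟨u', hu'G, hmap⟩ :=
          conj_vals p G htrans hcard hp3 htransl lam hlamG hlam0 hlaminf u hcase
        have hu'0 : u' ≠ 0 := hu'G.1
        have h1 := hmap 1 u hlamu
        rw [mul_one] at h1
        -- d = u' * u
        have h2 : d * 1 = u' * u := by
          apply some_injective p
          rw [← hdd1, hlamu, h1]
        obtain ⟨e, heG, hmape⟩ :=
          conj_vals p G htrans hcard hp3 htransl lam hlamG hlam0 hlaminf u⁻¹
          (inG_inv p G u hcase)
        have h3 := hmape u (u' * u) h1
        rw [inv_mul_cancel₀ hu0] at h3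
        have h4 : u = e * (u' * u) := some_injective p (hlamu.symm.trans h3)
        have h5 := hmape (-1) v hlamv
        have h6 : u⁻¹ * (-1) = v := by rw [hvu]; ring
        rw [h6] at h5
        have h7 : d * (-1) = e * v := by
          apply some_injective p
          rw [← hdd2, hlamv, h5]
        -- algebra: from h2, h4, h7, hvu : d * d = 1
        have h8 : e * u' = 1 := by
          have h9 : (e * u' - 1) * u = 0 := by linear_combination -h4
          rcases mul_eq_zero.mp h9 with h | h
          · linear_combination h
          · exact absurd h hu0
        have h10 : e * u⁻¹ = d := by
          rw [hvu] at h7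
          linear_combination h7
        have hd2 : d = u' * u := by rw [mul_one] at h2; exact h2
        have hu_inv : u * u⁻¹ = 1 := mul_inv_cancel₀ hu0
        linear_combination d * hd2 - (u' * u) * h10 + (u' * e) * hu_inv + h8
      · have hcG : inG p G (-u) := inG_neg_of_not p G htrans hcard hp3 htransl u hu0 hcase
        have hc0' : (-u : ZMod p) ≠ 0 := neg_ne_zero.mpr hu0
        obtain ⟨c', hc'G, hmap⟩ :=
          conj_vals p G htrans hcard hp3 htransl lam hlamG hlam0 hlaminf (-u) hcG
        have hc'0 : c' ≠ 0 := hc'G.1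
        have h1 := hmap (-1) v hlamv
        rw [show (-u) * (-1) = u by ring] at h1
        -- lam ↑u = ↑(c' * v); d = c' * v
        have h2 : d * 1 = c' * v := by
          apply some_injective p
          rw [← hdd1, hlamu, h1]
        obtain ⟨e, heG, hmape⟩ :=
          conj_vals p G htrans hcard hp3 htransl lam hlamG hlam0 hlaminf (-u)⁻¹
          (inG_inv p G (-u) hcG)
        have h3 := hmape u (c' * v) h1
        rw [show ((-u)⁻¹ * u : ZMod p) = -1 by
          rw [inv_neg, neg_mul, inv_mul_cancel₀ hu0]] at h3
        have h4 : v = e * (c' * v) := some_injective p (hlamv.symm.trans h3)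
        have h8 : e * c' = 1 := by
          have h9 : (e * c' - 1) * v = 0 := by linear_combination -h4
          rcases mul_eq_zero.mp h9 with h | h
          · linear_combination h
          · exact absurd h hv0
        -- v = (-u)⁻¹ * 1 ; lam ↑v = ↑(e * u)
        have h5 := hmape 1 u hlamu
        rw [mul_one] at h5
        have h6 : (-u)⁻¹ = v := by
          rw [hvu, inv_neg]
        rw [h6] at h5
        have h7 : d * (-1) = e * u := by
          apply some_injective p
          rw [← hdd2, hlamv, h5]
        have hd2 : d = c' * v := by rw [mul_one] at h2; exact h2
        have hu_inv : u * u⁻¹ = 1 := mul_inv_cancel₀ hu0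
        linear_combination d * hd2 - (c' * v) * h7 - (v * u) * h8 - u * hvu + hu_inv
    have hd1 : d = 1 := by
      have h9 : (d - 1) * (d + 1) = 0 := by linear_combination hd_eq
      rcases mul_eq_zero.mp h9 with h | h
      · linear_combination h
      · exfalso
        have : d = -1 := by linear_combination h
        rw [this] at hdG
        exact inG_neg_one p G htrans hcard hp3 htransl hdG
    have hsq : lam ^ 2 = 1 := by
      have hfin : pmul p d hd0 = 1 :=
        (pmul_congr p d 1 hd0 one_ne_zero hd1).trans (pmul_one p)
      rw [pow_two, hd, hfin]
    exact orderOf_eq_prime hsq hlamne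
  · -- uniqueness
    rintro lam' ⟨hG', h0', hinf', u', v', hu', hv', hprod'⟩
    obtain ⟨c', hc'0, hc'm, hc'eq⟩ := hdecomp lam' hG' h0' hinf'
    have hu'' : lam' (OnePoint.some (1 : ZMod p)) = OnePoint.some (c' * x₀) := by
      rw [hc'eq]
      show pmul p c' hc'0 (τ (OnePoint.some (1 : ZMod p))) = _
      rw [hx₀, pmul_some]
    have hv'' : lam' (OnePoint.some (-1 : ZMod p)) = OnePoint.some (c' * y₀) := by
      rw [hc'eq]
      show pmul p c' hc'0 (τ (OnePoint.some (-1 : ZMod p))) = _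
      rw [hy₀, pmul_some]
    have hu'eq : u' = c' * x₀ := some_injective p (hu'.symm.trans hu'')
    have hv'eq : v' = c' * y₀ := some_injective p (hv'.symm.trans hv'')
    have hc'sq : c' * c' = (-(x₀ * y₀))⁻¹ := by
      apply eq_inv_of_mul_eq_one_left
      rw [hu'eq, hv'eq] at hprod'
      linear_combination hprod'
    have : c' = c₀ := hc₀uniq c' ⟨⟨hc'0, hc'm⟩, hc'sq⟩
    rw [hc'eq, hlam]
    congr 1
    exact pmul_congr p c' c₀ hc'0 hc₀0 this


end UL

theorem unique_lambda_three_mod_four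
    (p : ℕ) [Fact p.Prime] (hp2 : p ≠ 2) (hp3 : p % 4 = 3)
    (G : Subgroup (Equiv.Perm (OnePoint (ZMod p))))
    (htrans : ∀ x y : OnePoint (ZMod p), ∃ g ∈ G, g x = y)
    (hcard : Nat.card G = (p ^ 3 - p) / 2)
    (htransl : ∀ a : ZMod p, ptrans p a ∈ G) :
    ∃ lam : Equiv.Perm (OnePoint (ZMod p)),
      (lam ∈ G ∧ lam (OnePoint.some (0 : ZMod p)) = OnePoint.infty ∧
        lam OnePoint.infty = OnePoint.some (0 : ZMod p) ∧
        ∃ u v : ZMod p, lam (OnePoint.some (1 : ZMod p)) = OnePoint.some u ∧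
          lam (OnePoint.some (-1 : ZMod p)) = OnePoint.some v ∧ -(u * v) = 1) ∧
      orderOf lam = 2 ∧
      ∀ lam' : Equiv.Perm (OnePoint (ZMod p)),
        (lam' ∈ G ∧ lam' (OnePoint.some (0 : ZMod p)) = OnePoint.infty ∧
          lam' OnePoint.infty = OnePoint.some (0 : ZMod p) ∧
          ∃ u v : ZMod p, lam' (OnePoint.some (1 : ZMod p)) = OnePoint.some u ∧
            lam' (OnePoint.some (-1 : ZMod p)) = OnePoint.some v ∧ -(u * v) = 1) →
        lam' = lam :=
  UL.main p hp2 hp3 G htrans hcard htransl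
end

section
/- Assume p ≡ 3 (mod 4). Suppose λ ∈ K̄ has order 2 and there is an odd natural number n with λ(z) = −zⁿ for all z ∈ (ℤ/p)*. Then the only solutions of xⁿ = x in (ℤ/p)* are x = 1 and x = −1. -/
section ZZAux

instance zzFintypeOnePoint (X : Type*) [Fintype X] : Fintype (OnePoint X) :=
  inferInstanceAs (Fintype (Option X))

theorem zz_ptrans_add (p : ℕ) (a b : ZMod p) : ptrans p (a + b) = ptrans p a * ptrans p b := by
  ext x
  cases x with
  | infty => rfl
  | coe z =>
    show OnePoint.some (z + (a + b)) = OnePoint.some (z + b + a)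
    rw [add_assoc, add_comm b a]

theorem zz_ptrans_pow (p : ℕ) (m : ℕ) : ptrans p 1 ^ m = ptrans p (m : ZMod p) := by
  induction m with
  | zero =>
    ext x
    cases x with
    | infty => rfl
    | coe z =>
      show OnePoint.some z = OnePoint.some (z + ((0 : ℕ) : ZMod p))
      rw [Nat.cast_zero, add_zero]
  | succ k ih =>
    rw [pow_succ, ih, ← zz_ptrans_add, Nat.cast_succ]

theorem zz_ptrans_inj (p : ℕ) {a b : ZMod p} (h : ptrans p a = ptrans p b) : a = b := by
  have h2 : Option.some ((0 : ZMod p) + a) = Option.some ((0 : ZMod p) + b) :=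
    congrArg (fun e : Equiv.Perm (OnePoint (ZMod p)) => e (OnePoint.some 0)) h
  simpa using h2

theorem zz_conj_ptrans_mem
    (p : ℕ) [hp : Fact p.Prime] (hp2 : p ≠ 2)
    (G : Subgroup (Equiv.Perm (OnePoint (ZMod p))))
    (htrans : ∀ x y : OnePoint (ZMod p), ∃ g ∈ G, g x = y)
    (hcard : Nat.card G = (p ^ 3 - p) / 2)
    (htransl : ∀ a : ZMod p, ptrans p a ∈ G)
    (g : Equiv.Perm (OnePoint (ZMod p))) (hg : g ∈ G)
    (hginf : g OnePoint.infty = OnePoint.infty) (a : ZMod p) :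
    ∃ b : ZMod p, g * ptrans p a * g⁻¹ = ptrans p b := by
  classical
  haveI : Fintype ↥G := Fintype.ofFinite _
  obtain ⟨q, hpq⟩ : ∃ q, p = 2 * q + 1 := by
    obtain ⟨k, hk⟩ := Nat.Prime.odd_of_ne_two hp.out hp2
    exact ⟨k, by omega⟩
  have hq1 : 1 ≤ q := by have := hp.out.two_le; omega
  -- the translation subgroup of G
  let φ : Multiplicative (ZMod p) →* ↥G :=
    { toFun := fun a => ⟨ptrans p a.toAdd, htransl _⟩
      map_one' := by
        ext1
        show ptrans p 0 = 1
        ext x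
        cases x with
        | infty => rfl
        | coe z => show OnePoint.some (z + 0) = OnePoint.some z; rw [add_zero]
      map_mul' := by
        intro x y
        ext1
        show ptrans p (x.toAdd + y.toAdd) = ptrans p x.toAdd * ptrans p y.toAdd
        exact zz_ptrans_add p _ _ }
  let T : Subgroup ↥G := φ.range
  have hφinj : Function.Injective φ := by
    intro a b h
    have : ptrans p a.toAdd = ptrans p b.toAdd := congrArg Subtype.val h
    exact Multiplicative.toAdd.injective (zz_ptrans_inj p this)
  have hcardT : Nat.card T = p := by
    rw [Nat.card_congr (MonoidHom.ofInjective hφinj).toEquiv.symm]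
    exact Nat.card_zmod p
  -- the stabilizer of ∞
  let B : Subgroup ↥G := MulAction.stabilizer ↥G (OnePoint.infty : OnePoint (ZMod p))
  have hTB : T ≤ B := by
    rintro t ⟨c, rfl⟩
    show _ • (OnePoint.infty : OnePoint (ZMod p)) = OnePoint.infty
    rfl
  have horb : MulAction.orbit ↥G (OnePoint.infty : OnePoint (ZMod p)) = Set.univ := by
    apply Set.eq_univ_of_forall
    intro y
    obtain ⟨h, hhG, hh⟩ := htrans OnePoint.infty y
    exact ⟨⟨h, hhG⟩, hh⟩
  have hcardX : Nat.card (OnePoint (ZMod p)) = p + 1 := by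
    rw [Nat.card_eq_fintype_card]
    show Fintype.card (Option (ZMod p)) = p + 1
    rw [Fintype.card_option, ZMod.card]
  have hcardOrb : Nat.card (MulAction.orbit ↥G (OnePoint.infty : OnePoint (ZMod p))) = p + 1 := by
    rw [horb, Nat.card_congr (Equiv.Set.univ _), hcardX]
  have hcardB : Nat.card B = q * p := by
    have key0 := MulAction.card_orbit_mul_card_stabilizer_eq_card_group ↥G
      (OnePoint.infty : OnePoint (ZMod p))
    have key : Nat.card (MulAction.orbit ↥G (OnePoint.infty : OnePoint (ZMod p))) *
        Nat.card B = Nat.card ↥G := by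
      simp only [Nat.card_eq_fintype_card]; convert key0
    rw [hcardOrb, hcard] at key
    have h3 : p ^ 3 - p = (p + 1) * (q * p) * 2 := by
      have : p ^ 3 = (p + 1) * (q * p) * 2 + p := by rw [hpq]; ring
      omega
    have h4 : (p ^ 3 - p) / 2 = (p + 1) * (q * p) := by omega
    rw [h4] at key
    exact Nat.eq_of_mul_eq_mul_left (by omega) key
  -- Sylow theory in B
  let T' : Subgroup ↥B := T.subgroupOf B
  have hcardT' : Nat.card T' = p := by
    rw [Nat.card_congr (Subgroup.subgroupOfEquivOfLe hTB).toEquiv]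
    exact hcardT
  have hfact : (Nat.card ↥B).factorization p = 1 := by
    rw [hcardB, Nat.factorization_mul (by omega) (by omega), Finsupp.add_apply,
      Nat.factorization_eq_zero_of_not_dvd (Nat.not_dvd_of_pos_of_lt (by omega) (by omega)),
      Nat.Prime.factorization_self hp.out]
  let P : Sylow p ↥B := Sylow.ofCard T' (by rw [hcardT', hfact, pow_one])
  have hPcard : Nat.card (P : Subgroup ↥B) = p := hcardT'
  have hidx : (P : Subgroup ↥B).index = q := by
    have h5 := Subgroup.card_mul_index (P : Subgroup ↥B)
    rw [hPcard, hcardB, mul_comm q p] at h5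
    exact Nat.eq_of_mul_eq_mul_left (by omega) h5
  have hm1 : Nat.card (Sylow p ↥B) = 1 := by
    have hmod := card_sylow_modEq_one p ↥B
    have hdvd := Sylow.card_dvd_index P
    rw [hidx] at hdvd
    have hle : Nat.card (Sylow p ↥B) ≤ q := Nat.le_of_dvd (by omega) hdvd
    have := hp.out.two_le
    unfold Nat.ModEq at hmod
    have h6 : Nat.card (Sylow p ↥B) % p = Nat.card (Sylow p ↥B) := Nat.mod_eq_of_lt (by omega)
    have h7 : 1 % p = 1 := Nat.mod_eq_of_lt (by omega)
    omega
  haveI hss : Subsingleton (Sylow p ↥B) := (Nat.card_eq_one_iff_unique.mp hm1).1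
  have hnorm : (P : Subgroup ↥B).Normal := by
    apply Subgroup.normalizer_eq_top_iff.mp
    rw [Subgroup.eq_top_iff']
    intro x
    exact Sylow.smul_eq_iff_mem_normalizer.mp (Subsingleton.elim (x • P) P)
  -- now conjugate
  let gG : ↥G := ⟨g, hg⟩
  have hgB : gG ∈ B := hginf
  let gB : ↥B := ⟨gG, hgB⟩
  let tG : ↥G := φ (Multiplicative.ofAdd a)
  have htT : tG ∈ T := ⟨Multiplicative.ofAdd a, rfl⟩
  let tB : ↥B := ⟨tG, hTB htT⟩
  have htP : tB ∈ (P : Subgroup ↥B) := by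
    show tB ∈ T'
    exact htT
  have hconj : gB * tB * gB⁻¹ ∈ (P : Subgroup ↥B) := hnorm.conj_mem tB htP gB
  obtain ⟨c, hc⟩ : ((gB * tB * gB⁻¹ : ↥B) : ↥G) ∈ T := hconj
  refine ⟨c.toAdd, ?_⟩
  have hval : (((gB * tB * gB⁻¹ : ↥B) : ↥G) : Equiv.Perm (OnePoint (ZMod p)))
      = g * ptrans p a * g⁻¹ := rfl
  have h8 := congrArg Subtype.val hc
  rw [hval] at h8
  exact h8.symm

theorem zz_fix_three
    (p : ℕ) [hp : Fact p.Prime] (hp2 : p ≠ 2)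
    (G : Subgroup (Equiv.Perm (OnePoint (ZMod p))))
    (htrans : ∀ x y : OnePoint (ZMod p), ∃ g ∈ G, g x = y)
    (hcard : Nat.card G = (p ^ 3 - p) / 2)
    (htransl : ∀ a : ZMod p, ptrans p a ∈ G)
    (g : Equiv.Perm (OnePoint (ZMod p))) (hg : g ∈ G)
    (hginf : g OnePoint.infty = OnePoint.infty)
    (hg0 : g (OnePoint.some (0 : ZMod p)) = OnePoint.some 0)
    (hg1 : g (OnePoint.some (1 : ZMod p)) = OnePoint.some 1) :
    ∀ z : ZMod p, g (OnePoint.some z) = OnePoint.some z := by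
  obtain ⟨b, hb⟩ := zz_conj_ptrans_mem p hp2 G htrans hcard htransl g hg hginf 1
  have hginv0 : g⁻¹ (OnePoint.some (0 : ZMod p)) = OnePoint.some 0 := by
    show g.symm (OnePoint.some (0 : ZMod p)) = OnePoint.some 0
    rw [Equiv.symm_apply_eq]
    exact hg0.symm
  have e1 : ptrans p 1 (OnePoint.some (0 : ZMod p)) = OnePoint.some 1 := by
    have e : ptrans p 1 (OnePoint.some (0 : ZMod p)) = OnePoint.some (0 + 1) := rfl
    rw [e, zero_add]
  have e2 : ptrans p b (OnePoint.some (0 : ZMod p)) = OnePoint.some b := by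
    have e : ptrans p b (OnePoint.some (0 : ZMod p)) = OnePoint.some (0 + b) := rfl
    rw [e, zero_add]
  have hb1 := congrArg
    (fun e : Equiv.Perm (OnePoint (ZMod p)) => e (OnePoint.some (0 : ZMod p))) hb
  simp only [Equiv.Perm.mul_apply] at hb1
  rw [hginv0, e1, hg1, e2] at hb1
  have hbv : b = 1 := (Option.some.inj hb1).symm
  rw [hbv] at hb
  have hcomm : Commute g (ptrans p 1) := mul_inv_eq_iff_eq_mul.mp hb
  intro z
  have hzv : ((z.val : ℕ) : ZMod p) = z := ZMod.natCast_rightInverse z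
  have hpow : ptrans p 1 ^ z.val = ptrans p z := by
    rw [zz_ptrans_pow p z.val, hzv]
  have e3 : ptrans p z (OnePoint.some (0 : ZMod p)) = OnePoint.some z := by
    have e : ptrans p z (OnePoint.some (0 : ZMod p)) = OnePoint.some (0 + z) := rfl
    rw [e, zero_add]
  have happ := congrArg
    (fun e : Equiv.Perm (OnePoint (ZMod p)) => e (OnePoint.some (0 : ZMod p)))
    (hcomm.pow_right z.val).eq
  simp only [Equiv.Perm.mul_apply] at happ
  rw [hpow, e3, hg0, e3] at happ
  exact happ

end ZZAux

theorem main_case_fixed_points_of_power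
    (p : ℕ) [Fact p.Prime] (hp2 : p ≠ 2) (hp3 : p % 4 = 3)
    (G : Subgroup (Equiv.Perm (OnePoint (ZMod p))))
    (htrans : ∀ x y : OnePoint (ZMod p), ∃ g ∈ G, g x = y)
    (hcard : Nat.card G = (p ^ 3 - p) / 2)
    (htransl : ∀ a : ZMod p, ptrans p a ∈ G)
    (lam : Equiv.Perm (OnePoint (ZMod p))) (hlamG : lam ∈ G)
    (hlam0 : lam (OnePoint.some (0 : ZMod p)) = OnePoint.infty)
    (hlaminf : lam OnePoint.infty = OnePoint.some (0 : ZMod p))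
    (hlam2 : orderOf lam = 2)
    (n : ℕ) (hn : Odd n)
    (hlam : ∀ z : ZMod p, z ≠ 0 → lam (OnePoint.some z) = OnePoint.some (-z ^ n)) :
    ∀ x : ZMod p, x ≠ 0 → (x ^ n = x ↔ x = 1 ∨ x = -1) := by
  intro x hx
  have hn0 : n ≠ 0 := by rintro rfl; simp at hn
  have h2ne : (2 : ZMod p) ≠ 0 := by
    have h2 : ((2 : ℕ) : ZMod p) ≠ 0 := by
      rw [Ne, ZMod.natCast_eq_zero_iff]
      intro hdvd
      exact hp2 ((Nat.prime_dvd_prime_iff_eq (Fact.out : p.Prime) Nat.prime_two).mp hdvd)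
    simpa using h2
  have hneg1 : (-1 : ZMod p) ≠ 1 := by
    intro h
    apply h2ne
    linear_combination -h
  have hinj : ∀ a b : ZMod p, a ^ n = b ^ n → a = b := by
    intro a b h
    by_cases ha : a = 0
    · subst ha
      rw [zero_pow hn0] at h
      exact ((pow_eq_zero_iff hn0).mp h.symm).symm
    by_cases hb : b = 0
    · subst hb
      rw [zero_pow hn0] at h
      exact absurd ((pow_eq_zero_iff hn0).mp h) ha
    have heq : lam (OnePoint.some a) = lam (OnePoint.some b) := by
      rw [hlam a ha, hlam b hb, h]
    exact Option.some.inj (lam.injective heq)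
  have hll : ∀ o : OnePoint (ZMod p), lam (lam o) = o := by
    have h2 : lam * lam = 1 := by
      have h := pow_orderOf_eq_one lam
      rwa [hlam2, pow_two] at h
    intro o
    have := congrArg (fun e : Equiv.Perm (OnePoint (ZMod p)) => e o) h2
    simpa [Equiv.Perm.mul_apply] using this
  have hsq : ∀ y : ZMod p, y ≠ 0 → (y ^ n) ^ n = y := by
    intro y hy
    have hyn : (-y ^ n : ZMod p) ≠ 0 := by
      simpa using pow_ne_zero n hy
    have h := hll (OnePoint.some y)
    rw [hlam y hy, hlam _ hyn] at h
    have h' := Option.some.inj h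
    rwa [Odd.neg_pow hn, neg_neg] at h'
  set s : Equiv.Perm (OnePoint (ZMod p)) := ptrans p 1 * lam with hs_def
  have hsG : s ∈ G := G.mul_mem (htransl 1) hlamG
  have hs0 : s (OnePoint.some (0 : ZMod p)) = OnePoint.infty := by
    rw [hs_def, Equiv.Perm.mul_apply, hlam0]; rfl
  have hsinf : s OnePoint.infty = OnePoint.some (1 : ZMod p) := by
    rw [hs_def, Equiv.Perm.mul_apply, hlaminf]
    have e : ptrans p 1 (OnePoint.some (0 : ZMod p)) = OnePoint.some (0 + 1) := rfl
    rw [e, zero_add]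
  have hsz : ∀ z : ZMod p, z ≠ 0 → s (OnePoint.some z) = OnePoint.some (1 - z ^ n) := by
    intro z hz
    rw [hs_def, Equiv.Perm.mul_apply, hlam z hz]
    have e : ptrans p 1 (OnePoint.some (-z ^ n)) = OnePoint.some (-z ^ n + 1) := rfl
    rw [e, neg_add_eq_sub]
  have hs1 : s (OnePoint.some (1 : ZMod p)) = OnePoint.some 0 := by
    rw [hsz 1 one_ne_zero, one_pow, sub_self]
  have hfix : ∀ z : ZMod p, s (s (s (OnePoint.some z))) = OnePoint.some z := by
    have h3 := zz_fix_three p hp2 G htrans hcard htransl (s * s * s)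
      (G.mul_mem (G.mul_mem hsG hsG) hsG)
      (by rw [Equiv.Perm.mul_apply, Equiv.Perm.mul_apply, hsinf, hs1, hs0])
      (by rw [Equiv.Perm.mul_apply, Equiv.Perm.mul_apply, hs0, hsinf, hs1])
      (by rw [Equiv.Perm.mul_apply, Equiv.Perm.mul_apply, hs1, hs0, hsinf])
    intro z
    have := h3 z
    simpa [Equiv.Perm.mul_apply] using this
  have claim : ∀ w : ZMod p, w ≠ 0 → w ≠ 1 → w ^ n = w → 2 * (1 - w) ^ n = 1 := by
    intro w hw0 hw1 hwn
    have hy0 : (1 - w : ZMod p) ≠ 0 := sub_ne_zero.mpr (Ne.symm hw1)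
    have hx3 := hfix w
    rw [hsz w hw0, hwn, hsz _ hy0] at hx3
    by_cases hz : (1 - (1 - w) ^ n : ZMod p) = 0
    · rw [hz, hs0] at hx3
      exact absurd hx3 (OnePoint.infty_ne_coe w)
    · rw [hsz _ hz] at hx3
      have h' := Option.some.inj hx3
      have h1 : ((1 - (1 - w) ^ n) ^ n : ZMod p) = 1 - w := by linear_combination -h'
      have h2 : (((1 - w) ^ n) ^ n : ZMod p) = 1 - w := hsq _ hy0
      have h3 : (1 - (1 - w) ^ n : ZMod p) = (1 - w) ^ n := hinj _ _ (h1.trans h2.symm)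
      linear_combination -h3
  constructor
  · intro hxn
    by_cases hx1 : x = 1
    · exact Or.inl hx1
    right
    have c1 := claim x hx hx1 hxn
    have c2 := claim (-1) (neg_ne_zero.mpr one_ne_zero) hneg1 (Odd.neg_one_pow hn)
    have h12 : (1 - (-1) : ZMod p) = 2 := by ring
    rw [h12] at c2
    have h4 : ((1 - x) ^ n : ZMod p) = 2 ^ n := mul_left_cancel₀ h2ne (c1.trans c2.symm)
    have h5 := hinj _ _ h4
    linear_combination -h5
  · rintro (rfl | rfl)
    · rw [one_pow]
    · rw [Odd.neg_one_pow hn]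
end
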